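/- arXiv:1903.05489 — 2 statements merged into one kernel-verified Lean document; each statement's English description precedes it below -/
import Mathlib

section
/- Let m, p be natural numbers, Q₁ a real m×m matrix, Q₂ a real m×p matrix, and Q₄ a real p×p matrix with Q₄ᵀ = Q₄ and Q₄ invertible. Let i, j ∈ Fin p with i ≠ j and set w := e_i - e_j ∈ ℝ^p. Define Q_red(τ) := Q₁ - Q₂ * (Q₄ + τ • (w wᵀ))⁻¹ * Q₂ᵀ and Q_ac := -(Q₂ * Q₄⁻¹). Suppose λ : ℝ → ℝ and u : ℝ → ℝ^m are differentiable at 0, and for all τ in some neighborhood of 0 the eigen-equation Q_red(τ) *ᵥ u(τ) = λ(τ) • u(τ) holds. Let v ∈ ℝ^m satisfy vᵀ * Q_red(0) = λ(0) • vᵀ and v ⬝ᵥ u(0) = 1. Then λ'(0) = (v ⬝ᵥ (Q_ac *ᵥ w)) * ((Q_ac *ᵥ w) ⬝ᵥ u(0)); i.e. the sensitivity of the eigenvalue of the Kron-reduced matrix to the interior susceptance perturbation B_ij equals v₁ᵀ Q_ac (e_i - e_j)(e_i - e_j)ᵀ Q_acᵀ u₁. -/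
open Matrix

private lemma my_mul_vecMulVec {m n k : Type*} [Fintype n] (A : Matrix m n ℝ) (a : n → ℝ) (b : k → ℝ) :
    A * vecMulVec a b = vecMulVec (A *ᵥ a) b := by
  ext i j
  simp [mul_apply, vecMulVec_apply, mulVec, dotProduct, Finset.sum_mul, mul_assoc]

private lemma my_vecMulVec_mul {m n k : Type*} [Fintype n] (a : m → ℝ) (b : n → ℝ) (A : Matrix n k ℝ) :
    vecMulVec a b * A = vecMulVec a (b ᵥ* A) := by
  ext i j
  simp [mul_apply, vecMulVec_apply, vecMul, dotProduct, Finset.mul_sum, mul_assoc]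

private lemma my_vecMulVec_mul_vecMulVec {m n k : Type*} [Fintype n] (a : m → ℝ) (b c : n → ℝ) (d : k → ℝ) :
    vecMulVec a b * vecMulVec c d = (b ⬝ᵥ c) • vecMulVec a d := by
  ext i j
  simp [mul_apply, vecMulVec_apply, dotProduct, Finset.sum_mul, Finset.mul_sum]
  exact Finset.sum_congr rfl fun k _ => by ring

private lemma my_vecMulVec_mulVec {m n : Type*} [Fintype n] (a : m → ℝ) (b : n → ℝ) (x : n → ℝ) :
    vecMulVec a b *ᵥ x = (b ⬝ᵥ x) • a := by
  ext i
  simp [mulVec, vecMulVec_apply, dotProduct, Finset.mul_sum, Finset.sum_mul]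
  exact Finset.sum_congr rfl fun k _ => by ring

/-- Sherman–Morrison for a symmetric rank-one update. -/
private lemma my_sherman {p : ℕ} (Q4 : Matrix (Fin p) (Fin p) ℝ) (hQ4 : IsUnit Q4.det)
    (w : Fin p → ℝ) (τ : ℝ) (h : 1 + τ * (w ⬝ᵥ Q4⁻¹ *ᵥ w) ≠ 0) :
    (Q4 + τ • vecMulVec w w)⁻¹ =
      Q4⁻¹ - (τ / (1 + τ * (w ⬝ᵥ Q4⁻¹ *ᵥ w))) • (Q4⁻¹ * vecMulVec w w * Q4⁻¹) := by
  set c := w ⬝ᵥ Q4⁻¹ *ᵥ w with hc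
  set s := τ / (1 + τ * c) with hs
  have h1 : Q4 * Q4⁻¹ = 1 := Matrix.mul_nonsing_inv _ hQ4
  have hWQW : vecMulVec w w * Q4⁻¹ * vecMulVec w w = c • vecMulVec w w := by
    rw [my_vecMulVec_mul, my_vecMulVec_mul_vecMulVec, ← dotProduct_mulVec]
  have hseq : s * (1 + τ * c) = τ := div_mul_cancel₀ τ h
  apply Matrix.inv_eq_right_inv
  have expand : (Q4 + τ • vecMulVec w w) * (Q4⁻¹ - s • (Q4⁻¹ * vecMulVec w w * Q4⁻¹)) =
      1 + (τ - s - τ * s * c) • (vecMulVec w w * Q4⁻¹) := by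
    have e1 : Q4 * (Q4⁻¹ * vecMulVec w w * Q4⁻¹) = vecMulVec w w * Q4⁻¹ := by
      have h' : Q4 * (Q4⁻¹ * vecMulVec w w * Q4⁻¹) = (Q4 * Q4⁻¹) * (vecMulVec w w * Q4⁻¹) := by
        simp only [Matrix.mul_assoc]
      rw [h', h1, Matrix.one_mul]
    have e2 : vecMulVec w w * (Q4⁻¹ * vecMulVec w w * Q4⁻¹) = c • (vecMulVec w w * Q4⁻¹) := by
      have h' : vecMulVec w w * (Q4⁻¹ * vecMulVec w w * Q4⁻¹) =
          (vecMulVec w w * Q4⁻¹ * vecMulVec w w) * Q4⁻¹ := by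
        simp only [Matrix.mul_assoc]
      rw [h', hWQW, smul_mul_assoc]
    simp only [Matrix.add_mul, Matrix.mul_sub, mul_smul_comm, smul_mul_assoc, h1, e1, e2,
      smul_smul]
    module
  rw [expand]
  have : τ - s - τ * s * c = 0 := by linear_combination -hseq
  rw [this, zero_smul, add_zero]

/-- Lemma 1 of the paper: sensitivity of an eigenvalue of the Kron-reduced grounded
Laplacian to a perturbation of the susceptance `B_ij` between two interior nodes `i` and
`j` (so `w = e_i - e_j`):
`λ'(0) = v₁ᵀ Q_ac (e_i - e_j)(e_i - e_j)ᵀ Q_acᵀ u₁`. -/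
theorem lemma1_interior_sensitivity {m p : ℕ}
    (Q1 : Matrix (Fin m) (Fin m) ℝ) (Q2 : Matrix (Fin m) (Fin p) ℝ)
    (Q4 : Matrix (Fin p) (Fin p) ℝ) (hQ4sym : Q4ᵀ = Q4) (hQ4 : IsUnit Q4.det)
    (i j : Fin p) (hij : i ≠ j)
    (w : Fin p → ℝ) (hw : w = Pi.single i 1 - Pi.single j 1)
    (Qred : ℝ → Matrix (Fin m) (Fin m) ℝ)
    (hQred : ∀ τ : ℝ, Qred τ = Q1 - Q2 * (Q4 + τ • vecMulVec w w)⁻¹ * Q2ᵀ)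
    (Qac : Matrix (Fin m) (Fin p) ℝ) (hQac : Qac = -(Q2 * Q4⁻¹))
    (lam : ℝ → ℝ) (u : ℝ → (Fin m → ℝ))
    (hlam : DifferentiableAt ℝ lam 0) (hu : DifferentiableAt ℝ u 0)
    (heig : ∀ᶠ τ : ℝ in nhds 0, Qred τ *ᵥ u τ = lam τ • u τ)
    (v : Fin m → ℝ)
    (hv : v ᵥ* Qred 0 = lam 0 • v)
    (hnorm : v ⬝ᵥ u 0 = 1) :
    deriv lam 0 = (v ⬝ᵥ (Qac *ᵥ w)) * ((Qac *ᵥ w) ⬝ᵥ u 0) := by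
  set c : ℝ := w ⬝ᵥ Q4⁻¹ *ᵥ w with hc
  set A : Matrix (Fin m) (Fin m) ℝ := Q1 - Q2 * Q4⁻¹ * Q2ᵀ with hA
  set M : Matrix (Fin m) (Fin m) ℝ := Q2 * (Q4⁻¹ * vecMulVec w w * Q4⁻¹) * Q2ᵀ with hM
  set sf : ℝ → ℝ := fun τ => τ / (1 + τ * c) with hsf
  -- eventual nonvanishing of the denominator
  have hcont : ContinuousAt (fun τ : ℝ => 1 + τ * c) 0 := by fun_prop
  have hne : ∀ᶠ τ : ℝ in nhds 0, 1 + τ * c ≠ 0 := by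
    have := hcont.eventually_ne (y := (0 : ℝ)) (by norm_num)
    simpa using this
  -- eventual explicit formula for `Qred`
  have hform : ∀ᶠ τ : ℝ in nhds 0, Qred τ = A + sf τ • M := by
    filter_upwards [hne] with τ hτ
    rw [hQred, my_sherman Q4 hQ4 w τ hτ]
    have hrw : Q2 * (Q4⁻¹ - sf τ • (Q4⁻¹ * vecMulVec w w * Q4⁻¹)) * Q2ᵀ =
        Q2 * Q4⁻¹ * Q2ᵀ - sf τ • M := by
      rw [Matrix.mul_sub, Matrix.sub_mul, Matrix.mul_smul, Matrix.smul_mul, hM]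
    rw [show (τ / (1 + τ * (w ⬝ᵥ Q4⁻¹ *ᵥ w))) = sf τ from rfl, hrw, hA]
    abel
  have hQred0 : Qred 0 = A := by
    rw [hQred]; simp [hA]
  -- derivative machinery
  have hud : HasDerivAt u (deriv u 0) 0 := hu.hasDerivAt
  set du : Fin m → ℝ := deriv u 0 with hdu
  have hcomp : ∀ a : Fin m → ℝ, HasDerivAt (fun τ => a ⬝ᵥ u τ) (a ⬝ᵥ du) 0 := by
    intro a
    have hk : ∀ k, HasDerivAt (fun τ => u τ k) (du k) 0 := fun k => hasDerivAt_pi.mp hud k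
    have := HasDerivAt.fun_sum (u := (Finset.univ : Finset (Fin m)))
      (A := fun k τ => a k * u τ k) (A' := fun k => a k * du k)
      (fun k _ => (hk k).const_mul (a k))
    simpa [dotProduct] using this
  have hs0 : HasDerivAt sf 1 0 := by
    have hden : HasDerivAt (fun τ : ℝ => 1 + τ * c) c 0 := by
      simpa using ((hasDerivAt_id (0 : ℝ)).mul_const c).const_add 1
    have := (hasDerivAt_id (0 : ℝ)).fun_div hden (by norm_num)
    simpa [hsf] using this
  set F : ℝ → ℝ := fun τ => (v ᵥ* A) ⬝ᵥ u τ + sf τ * ((v ᵥ* M) ⬝ᵥ u τ) with hF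
  set G : ℝ → ℝ := fun τ => lam τ * (v ⬝ᵥ u τ) with hG
  have hFd : HasDerivAt F ((v ᵥ* A) ⬝ᵥ du +
      (1 * ((v ᵥ* M) ⬝ᵥ u 0) + sf 0 * ((v ᵥ* M) ⬝ᵥ du))) 0 :=
    (hcomp _).add (hs0.mul (hcomp _))
  have hGd : HasDerivAt G (deriv lam 0 * (v ⬝ᵥ u 0) + lam 0 * (v ⬝ᵥ du)) 0 :=
    hlam.hasDerivAt.mul (hcomp v)
  have hFG : F =ᶠ[nhds 0] G := by
    filter_upwards [hform, heig] with τ h1 h2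
    have : F τ = v ⬝ᵥ (Qred τ *ᵥ u τ) := by
      rw [h1]
      simp [hF, Matrix.add_mulVec, Matrix.smul_mulVec, dotProduct_add, dotProduct_smul,
        Matrix.dotProduct_mulVec, smul_eq_mul]
    rw [show F τ = G τ from by
      rw [this, h2, hG]
      simp [dotProduct_smul, smul_eq_mul]]
  have hderiv : deriv F 0 = deriv G 0 := hFG.deriv_eq
  rw [hFd.deriv, hGd.deriv] at hderiv
  have hvA : (v ᵥ* A) ⬝ᵥ du = lam 0 * (v ⬝ᵥ du) := by
    rw [← hQred0, hv, smul_dotProduct, smul_eq_mul]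
  have hsf0 : sf 0 = 0 := by simp [hsf]
  rw [hvA, hsf0, hnorm, one_mul, zero_mul, mul_one, add_zero] at hderiv
  have hkey : deriv lam 0 = (v ᵥ* M) ⬝ᵥ u 0 := by linarith
  rw [hkey]
  -- final algebra
  have hQ4invsym : Q4⁻¹ᵀ = Q4⁻¹ := by rw [Matrix.transpose_nonsing_inv, hQ4sym]
  set B : Matrix (Fin m) (Fin p) ℝ := Q2 * Q4⁻¹ with hB
  have hMB : M = B * vecMulVec w w * Bᵀ := by
    rw [hM, hB, Matrix.transpose_mul, hQ4invsym]
    simp only [Matrix.mul_assoc]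
  have hz : Qac *ᵥ w = -(B *ᵥ w) := by rw [hQac, hB, Matrix.neg_mulVec]
  rw [← Matrix.dotProduct_mulVec, hMB, hz]
  have : (B * vecMulVec w w * Bᵀ) *ᵥ u 0 = ((w ⬝ᵥ (Bᵀ *ᵥ u 0)) • (B *ᵥ w)) := by
    rw [← Matrix.mulVec_mulVec, ← Matrix.mulVec_mulVec, my_vecMulVec_mulVec,
      Matrix.mulVec_smul]
  rw [this]
  have hwB : w ⬝ᵥ (Bᵀ *ᵥ u 0) = (B *ᵥ w) ⬝ᵥ u 0 := by
    rw [Matrix.dotProduct_mulVec, Matrix.vecMul_transpose]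
  rw [hwB]
  simp [dotProduct_smul, smul_eq_mul, dotProduct_neg, neg_dotProduct]
  ring
end

section
/- Let m, p be natural numbers, Q₁ a real m×m matrix with Q₁ᵀ = Q₁, Q₂ a real m×p matrix, and Q₄ a real p×p matrix with Q₄ᵀ = Q₄ and Q₄ invertible, and let w ∈ ℝ^p. Define Q_red(τ) := Q₁ - Q₂ * (Q₄ + τ • (w wᵀ))⁻¹ * Q₂ᵀ and Q_ac := -(Q₂ * Q₄⁻¹). Suppose λ : ℝ → ℝ and u : ℝ → ℝ^m are differentiable at 0, for all τ in some neighborhood of 0 the eigen-equation Q_red(τ) *ᵥ u(τ) = λ(τ) • u(τ) holds, and u(0) ⬝ᵥ u(0) = 1. Then λ'(0) = (u(0) ⬝ᵥ (Q_ac *ᵥ w))²; in particular λ'(0) ≥ 0, i.e. increasing the susceptance of any line in the interior network (w = e_i - e_j) or of any interior self-loop to the infinite bus (w = e_i) can never decrease an eigenvalue of the Kron-reduced grounded Laplacian. -/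
open Matrix

private lemma vecMulVec_mulVec' {n : ℕ} (a b x : Fin n → ℝ) :
    (vecMulVec a b) *ᵥ x = (b ⬝ᵥ x) • a := by
  ext i
  simp only [vecMulVec_apply, mulVec, dotProduct, Pi.smul_apply, smul_eq_mul, Finset.sum_mul]
  exact Finset.sum_congr rfl fun k _ => by ring

private lemma vecMulVec_sandwich {n : ℕ} (w : Fin n → ℝ) (M : Matrix (Fin n) (Fin n) ℝ) :
    vecMulVec w w * M * vecMulVec w w = (w ⬝ᵥ (M *ᵥ w)) • vecMulVec w w := by
  ext i j
  simp only [Matrix.mul_apply, Matrix.vecMulVec_apply, Matrix.smul_apply, Matrix.mulVec,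
    dotProduct, smul_eq_mul, Finset.sum_mul, Finset.mul_sum]
  rw [Finset.sum_comm]
  refine Finset.sum_congr rfl fun k _ => Finset.sum_congr rfl fun l _ => by ring

private lemma conj_vecMulVec {m p : ℕ} (B : Matrix (Fin m) (Fin p) ℝ) (w : Fin p → ℝ) :
    B * vecMulVec w w * Bᵀ = vecMulVec (B *ᵥ w) (B *ᵥ w) := by
  ext i j
  simp only [Matrix.mul_apply, Matrix.vecMulVec_apply, Matrix.transpose_apply, Matrix.mulVec,
    dotProduct, Finset.sum_mul, Finset.mul_sum]
  refine Finset.sum_congr rfl fun k _ => Finset.sum_congr rfl fun l _ => by ring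

private lemma sherman_morrison {p : ℕ} (Q4 : Matrix (Fin p) (Fin p) ℝ)
    (hQ4 : IsUnit Q4.det) (w : Fin p → ℝ) (τ : ℝ)
    (h : 1 + τ * (w ⬝ᵥ (Q4⁻¹ *ᵥ w)) ≠ 0) :
    (Q4 + τ • vecMulVec w w)⁻¹ =
      Q4⁻¹ - (τ / (1 + τ * (w ⬝ᵥ (Q4⁻¹ *ᵥ w)))) • (Q4⁻¹ * vecMulVec w w * Q4⁻¹) := by
  set c : ℝ := w ⬝ᵥ (Q4⁻¹ *ᵥ w) with hc
  set s : ℝ := τ / (1 + τ * c) with hs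
  set W := vecMulVec w w with hW
  have h1 : Q4 * Q4⁻¹ = 1 := mul_nonsing_inv Q4 hQ4
  have h2 : W * Q4⁻¹ * W = c • W := vecMulVec_sandwich w Q4⁻¹
  apply inv_eq_right_inv
  have e1 : Q4 * (s • (Q4⁻¹ * W * Q4⁻¹)) = s • (W * Q4⁻¹) := by
    rw [Matrix.mul_smul, Matrix.mul_assoc, ← Matrix.mul_assoc Q4 Q4⁻¹, h1, Matrix.one_mul]
  have e2 : (τ • W) * Q4⁻¹ = τ • (W * Q4⁻¹) := Matrix.smul_mul τ W Q4⁻¹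
  have e3 : (τ • W) * (s • (Q4⁻¹ * W * Q4⁻¹)) = (τ * (s * c)) • (W * Q4⁻¹) := by
    have e : W * (Q4⁻¹ * W * Q4⁻¹) = c • (W * Q4⁻¹) := by
      have : W * (Q4⁻¹ * W * Q4⁻¹) = (W * Q4⁻¹ * W) * Q4⁻¹ := by
        simp only [Matrix.mul_assoc]
      rw [this, h2, Matrix.smul_mul]
    rw [Matrix.smul_mul, Matrix.mul_smul, smul_smul, e, smul_smul, mul_assoc]
  have hτ : τ - τ * (s * c) = s := by
    rw [hs]; field_simp; ring
  calc (Q4 + τ • W) * (Q4⁻¹ - s • (Q4⁻¹ * W * Q4⁻¹))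
      = Q4 * Q4⁻¹ - Q4 * (s • (Q4⁻¹ * W * Q4⁻¹)) + ((τ • W) * Q4⁻¹
          - (τ • W) * (s • (Q4⁻¹ * W * Q4⁻¹))) := by
        rw [Matrix.add_mul, Matrix.mul_sub, Matrix.mul_sub]
    _ = 1 - s • (W * Q4⁻¹) + (τ • (W * Q4⁻¹) - (τ * (s * c)) • (W * Q4⁻¹)) := by
        rw [h1, e1, e2, e3]
    _ = 1 - s • (W * Q4⁻¹) + s • (W * Q4⁻¹) := by rw [← sub_smul, hτ]
    _ = 1 := by abel

/-- Section IV-C of the paper: for a symmetric grounded Laplacian, the sensitivity of an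
eigenvalue of the Kron-reduced matrix to any interior susceptance perturbation
`τ • w wᵀ` equals `(u(0)ᵀ Q_ac w)² ≥ 0`; increasing the susceptance of any line in the
interior network can never decrease an eigenvalue of the Kron-reduced grounded
Laplacian. -/
theorem interior_sensitivity_nonneg {m p : ℕ}
    (Q1 : Matrix (Fin m) (Fin m) ℝ) (hQ1sym : Q1ᵀ = Q1)
    (Q2 : Matrix (Fin m) (Fin p) ℝ)
    (Q4 : Matrix (Fin p) (Fin p) ℝ) (hQ4sym : Q4ᵀ = Q4) (hQ4 : IsUnit Q4.det)
    (w : Fin p → ℝ)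
    (Qred : ℝ → Matrix (Fin m) (Fin m) ℝ)
    (hQred : ∀ τ : ℝ, Qred τ = Q1 - Q2 * (Q4 + τ • vecMulVec w w)⁻¹ * Q2ᵀ)
    (Qac : Matrix (Fin m) (Fin p) ℝ) (hQac : Qac = -(Q2 * Q4⁻¹))
    (lam : ℝ → ℝ) (u : ℝ → (Fin m → ℝ))
    (hlam : DifferentiableAt ℝ lam 0) (hu : DifferentiableAt ℝ u 0)
    (heig : ∀ᶠ τ : ℝ in nhds 0, Qred τ *ᵥ u τ = lam τ • u τ)
    (hnorm : u 0 ⬝ᵥ u 0 = 1) :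
    deriv lam 0 = (u 0 ⬝ᵥ (Qac *ᵥ w)) ^ 2 ∧ 0 ≤ deriv lam 0 := by
  set c : ℝ := w ⬝ᵥ (Q4⁻¹ *ᵥ w) with hc
  set a : Fin m → ℝ := (Q2 * Q4⁻¹) *ᵥ w with ha
  set A0 : Matrix (Fin m) (Fin m) ℝ := Q1 - Q2 * Q4⁻¹ * Q2ᵀ with hA0
  set u0 : Fin m → ℝ := u 0 with hu0
  set u' : Fin m → ℝ := deriv u 0 with hu'
  set k : ℝ := u0 ⬝ᵥ a with hk
  -- symmetry facts
  have hQ4invsym : (Q4⁻¹)ᵀ = Q4⁻¹ := by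
    rw [transpose_nonsing_inv, hQ4sym]
  have hA0sym : A0ᵀ = A0 := by
    rw [hA0, transpose_sub, hQ1sym, transpose_mul, transpose_mul, transpose_transpose,
      hQ4invsym, Matrix.mul_assoc]
  -- eigen-equation at 0
  have hQred0 : Qred 0 = A0 := by
    rw [hQred 0, hA0]
    norm_num
  have hA0u0 : A0 *ᵥ u0 = lam 0 • u0 := by
    rw [← hQred0]
    exact heig.self_of_nhds
  have hA0dot : ∀ x : Fin m → ℝ, u0 ⬝ᵥ (A0 *ᵥ x) = lam 0 * (u0 ⬝ᵥ x) := by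
    intro x
    rw [dotProduct_mulVec, ← Matrix.mulVec_transpose, hA0sym, hA0u0, smul_dotProduct,
      smul_eq_mul]
  -- eventually, the perturbed denominator is nonzero
  have hcont : ContinuousAt (fun τ : ℝ => 1 + τ * c) 0 := by fun_prop
  have hne : ∀ᶠ τ : ℝ in nhds 0, 1 + τ * c ≠ 0 := by
    have h0 : (fun τ : ℝ => 1 + τ * c) 0 ≠ 0 := by norm_num
    exact hcont.eventually_ne h0
  -- the two scalar functions
  set φ : ℝ → ℝ := fun τ => lam 0 * (u0 ⬝ᵥ u τ) + (τ / (1 + τ * c)) * (k * (a ⬝ᵥ u τ))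
    with hφdef
  set ψ : ℝ → ℝ := fun τ => lam τ * (u0 ⬝ᵥ u τ) with hψdef
  have heq : φ =ᶠ[nhds 0] ψ := by
    filter_upwards [hne, heig] with τ h1 h2
    have hinv := sherman_morrison Q4 hQ4 w τ h1
    have hQt : Qred τ = A0 + (τ / (1 + τ * c)) • vecMulVec a a := by
      have hsand : Q2 * (Q4⁻¹ * vecMulVec w w * Q4⁻¹) * Q2ᵀ = vecMulVec a a := by
        have hB : (Q2 * Q4⁻¹)ᵀ = Q4⁻¹ * Q2ᵀ := by
          rw [transpose_mul, hQ4invsym]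
        have : Q2 * (Q4⁻¹ * vecMulVec w w * Q4⁻¹) * Q2ᵀ
            = (Q2 * Q4⁻¹) * vecMulVec w w * ((Q2 * Q4⁻¹)ᵀ) := by
          rw [hB]; simp only [Matrix.mul_assoc]
        rw [this, conj_vecMulVec (Q2 * Q4⁻¹) w]
      rw [hQred τ, hinv, Matrix.mul_sub, Matrix.sub_mul, Matrix.mul_smul, Matrix.smul_mul,
        hsand, hA0]
      abel
    have : u0 ⬝ᵥ (Qred τ *ᵥ u τ) = u0 ⬝ᵥ (lam τ • u τ) := by rw [h2]
    rw [hQt] at this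
    rw [Matrix.add_mulVec, Matrix.smul_mulVec, vecMulVec_mulVec'] at this
    simp only [dotProduct_add, dotProduct_smul, smul_eq_mul, hA0dot] at this
    simp only [hφdef, hψdef]
    linear_combination this
  -- derivatives
  have hud : HasDerivAt u u' 0 := hu.hasDerivAt
  have hdot : ∀ v : Fin m → ℝ, HasDerivAt (fun τ => v ⬝ᵥ u τ) (v ⬝ᵥ u') 0 := by
    intro v
    have hcoord : ∀ i, HasDerivAt (fun τ => u τ i) (u' i) 0 := hasDerivAt_pi.1 hud
    have hsum : HasDerivAt (fun τ => ∑ i, v i * u τ i) (∑ i, v i * u' i) 0 :=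
      HasDerivAt.fun_sum fun i _ => (hcoord i).const_mul (v i)
    simpa [dotProduct] using hsum
  have hg : HasDerivAt (fun τ : ℝ => 1 + τ * c) c 0 := by
    simpa using ((hasDerivAt_id (0 : ℝ)).mul_const c).const_add 1
  have hg0 : (1 : ℝ) + 0 * c ≠ 0 := by norm_num
  have h2 : HasDerivAt (fun τ : ℝ => τ / (1 + τ * c)) 1 0 := by
    have := (hasDerivAt_id (0 : ℝ)).fun_div hg hg0
    simpa using this
  have h3 : HasDerivAt (fun τ => k * (a ⬝ᵥ u τ)) (k * (a ⬝ᵥ u')) 0 :=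
    (hdot a).const_mul k
  have h4 : HasDerivAt (fun τ : ℝ => (τ / (1 + τ * c)) * (k * (a ⬝ᵥ u τ)))
      (k * (a ⬝ᵥ u0)) 0 := by
    have := h2.fun_mul h3
    simpa using this
  have hφ : HasDerivAt φ (lam 0 * (u0 ⬝ᵥ u') + k * (a ⬝ᵥ u0)) 0 :=
    ((hdot u0).const_mul (lam 0)).add h4
  have hψ : HasDerivAt ψ (deriv lam 0 + lam 0 * (u0 ⬝ᵥ u')) 0 := by
    have := hlam.hasDerivAt.fun_mul (hdot u0)
    simpa [hnorm, ← hu0] using this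
  have hψ2 : HasDerivAt ψ (lam 0 * (u0 ⬝ᵥ u') + k * (a ⬝ᵥ u0)) 0 :=
    hφ.congr_of_eventuallyEq heq.symm
  have huniq : deriv lam 0 + lam 0 * (u0 ⬝ᵥ u') = lam 0 * (u0 ⬝ᵥ u') + k * (a ⬝ᵥ u0) :=
    hψ.unique hψ2
  have hderiv : deriv lam 0 = k * (a ⬝ᵥ u0) := by linarith
  have hka : a ⬝ᵥ u0 = k := by rw [hk, dotProduct_comm]
  have hsq : deriv lam 0 = (u0 ⬝ᵥ a) ^ 2 := by
    rw [hderiv, hka, hk]; ring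
  have hQacw : Qac *ᵥ w = -a := by
    rw [hQac, Matrix.neg_mulVec, ha]
  have hfinal : deriv lam 0 = (u0 ⬝ᵥ (Qac *ᵥ w)) ^ 2 := by
    rw [hQacw, dotProduct_neg, neg_sq, hsq]
  exact ⟨hfinal, hfinal ▸ sq_nonneg _⟩
end
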